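/- For all n ≥ 0, there is a descent-set-preserving bijection between Av_n(231,312,321) and the set of binary words of length n that are empty or contain no two consecutive ones and end in zero (where the descent set of a word w = w_1…w_n is {i : w_i > w_{i+1}}). Consequently Σ_{σ ∈ Av_n(231,312,321)} q^{maj σ} t^{des σ} equals the corresponding sum of q^{maj w} t^{des w} over such words w. -/

import Mathlib

open scoped Classical

/-- `σ` contains the pattern `π`. -/
def permContains {n k : ℕ} (σ : Equiv.Perm (Fin n)) (π : Equiv.Perm (Fin k)) : Prop :=
  ∃ f : Fin k → Fin n, StrictMono f ∧ ∀ i j : Fin k, π i < π j ↔ σ (f i) < σ (f j)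

/-- `σ` avoids the pattern `π`. -/
def permAvoids {n k : ℕ} (σ : Equiv.Perm (Fin n)) (π : Equiv.Perm (Fin k)) : Prop :=
  ¬ permContains σ π

def p123 : Equiv.Perm (Fin 3) := 1
def p132 : Equiv.Perm (Fin 3) := Equiv.swap 1 2
def p213 : Equiv.Perm (Fin 3) := Equiv.swap 0 1
def p231 : Equiv.Perm (Fin 3) := finRotate 3
def p312 : Equiv.Perm (Fin 3) := (finRotate 3)⁻¹
def p321 : Equiv.Perm (Fin 3) := Equiv.swap 0 2

/-- Descent set of a permutation, as a set of (1-based) positions `i` with `a_i > a_{i+1}`. -/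
def desSet {n : ℕ} (σ : Equiv.Perm (Fin n)) : Finset ℕ :=
  (Finset.Ico 1 n).filter
    (fun i => ∀ h : i < n, σ ⟨i, h⟩ < σ ⟨i - 1, Nat.lt_of_le_of_lt (Nat.sub_le i 1) h⟩)

/-- Major index: sum of descent positions. -/
def majIdx {n : ℕ} (σ : Equiv.Perm (Fin n)) : ℕ := ∑ i ∈ desSet σ, i

/-- Number of descents. -/
def desNum {n : ℕ} (σ : Equiv.Perm (Fin n)) : ℕ := (desSet σ).card

/-- Number of inversions. -/
def invNum {n : ℕ} (σ : Equiv.Perm (Fin n)) : ℕ :=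
  ((Finset.univ : Finset (Fin n × Fin n)).filter (fun p => p.1 < p.2 ∧ σ p.2 < σ p.1)).card

/-- Descent set of a binary word (1-based positions i with w_i = 1 and w_{i+1} = 0). -/
def wordDesSet {n : ℕ} (w : Fin n → Bool) : Finset ℕ :=
  (Finset.Ico 1 n).filter
    (fun i => ∀ h : i < n,
      w ⟨i - 1, Nat.lt_of_le_of_lt (Nat.sub_le i 1) h⟩ = true ∧ w ⟨i, h⟩ = false)

def wordMaj {n : ℕ} (w : Fin n → Bool) : ℕ := ∑ i ∈ wordDesSet w, i

def wordDes {n : ℕ} (w : Fin n → Bool) : ℕ := (wordDesSet w).card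

/-- A binary word that is empty, or has no two consecutive ones and ends in zero. -/
def goodWord {n : ℕ} (w : Fin n → Bool) : Prop :=
  (∀ i : ℕ, ∀ h : i + 1 < n, w ⟨i, Nat.lt_of_succ_lt h⟩ = true → w ⟨i + 1, h⟩ = false) ∧
  (∀ h : 0 < n, w ⟨n - 1, Nat.sub_lt h Nat.one_pos⟩ = false)

namespace AvAux

variable {n : ℕ}

lemma p231_eq : ∀ i, p231 i = ![1, 2, 0] i := by decide
lemma p312_eq : ∀ i, p312 i = ![2, 0, 1] i := by decide
lemma p321_eq : ∀ i, p321 i = ![2, 1, 0] i := by decide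

/-- Every inversion of `σ` is an adjacent transposition of adjacent values. -/
def Structured (σ : Equiv.Perm (Fin n)) : Prop :=
  ∀ a b : Fin n, a < b → σ b < σ a →
    (b : ℕ) = (a : ℕ) + 1 ∧ (σ a : ℕ) = (a : ℕ) + 1 ∧ (σ b : ℕ) = (a : ℕ)

lemma structured_of_bounds {σ : Equiv.Perm (Fin n)}
    (hb : ∀ k : Fin n, (σ k : ℕ) ≤ (k : ℕ) + 1 ∧ (k : ℕ) ≤ (σ k : ℕ) + 1) :
    Structured σ := by
  intro a b hab hba
  have h1 := (hb a).1
  have h2 := (hb b).2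
  have h3 : (a : ℕ) < b := hab
  have h4 : (σ b : ℕ) < σ a := hba
  omega

lemma strictMono_vec {a b c : Fin n} (hab : a < b) (hbc : b < c) :
    StrictMono ![a, b, c] := by
  intro i j hij
  match i, j with
  | 0, 1 => simpa using hab
  | 0, 2 => simpa using hab.trans hbc
  | 1, 2 => simpa using hbc
  | 0, 0 | 1, 1 | 2, 2 | 1, 0 | 2, 0 | 2, 1 => exact absurd hij (by decide)

lemma contains_231 {σ : Equiv.Perm (Fin n)} {a b c : Fin n} (hab : a < b) (hbc : b < c)
    (h1 : σ a < σ b) (h2 : σ c < σ a) : permContains σ p231 := by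
  have n1 : (σ a : ℕ) < σ b := h1
  have n2 : (σ c : ℕ) < σ a := h2
  refine ⟨![a, b, c], strictMono_vec hab hbc, ?_⟩
  intro i j
  match i, j with
  | 0, 0 => exact iff_of_false (by decide) (lt_irrefl _)
  | 1, 1 => exact iff_of_false (by decide) (lt_irrefl _)
  | 2, 2 => exact iff_of_false (by decide) (lt_irrefl _)
  | 0, 1 => exact iff_of_true (by decide) h1
  | 0, 2 => exact iff_of_false (by decide) (not_lt.mpr h2.le)
  | 1, 0 => exact iff_of_false (by decide) (not_lt.mpr h1.le)
  | 1, 2 => exact iff_of_false (by decide) (not_lt.mpr (h2.trans h1).le)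
  | 2, 0 => exact iff_of_true (by decide) h2
  | 2, 1 => exact iff_of_true (by decide) (h2.trans h1)

lemma contains_312 {σ : Equiv.Perm (Fin n)} {a b c : Fin n} (hab : a < b) (hbc : b < c)
    (h1 : σ b < σ c) (h2 : σ c < σ a) : permContains σ p312 := by
  have n1 : (σ b : ℕ) < σ c := h1
  have n2 : (σ c : ℕ) < σ a := h2
  refine ⟨![a, b, c], strictMono_vec hab hbc, ?_⟩
  intro i j
  match i, j with
  | 0, 0 => exact iff_of_false (by decide) (lt_irrefl _)
  | 1, 1 => exact iff_of_false (by decide) (lt_irrefl _)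
  | 2, 2 => exact iff_of_false (by decide) (lt_irrefl _)
  | 0, 1 => exact iff_of_false (by decide) (not_lt.mpr (h1.trans h2).le)
  | 0, 2 => exact iff_of_false (by decide) (not_lt.mpr h2.le)
  | 1, 0 => exact iff_of_true (by decide) (h1.trans h2)
  | 1, 2 => exact iff_of_true (by decide) h1
  | 2, 0 => exact iff_of_true (by decide) h2
  | 2, 1 => exact iff_of_false (by decide) (not_lt.mpr h1.le)

lemma contains_321 {σ : Equiv.Perm (Fin n)} {a b c : Fin n} (hab : a < b) (hbc : b < c)
    (h1 : σ b < σ a) (h2 : σ c < σ b) : permContains σ p321 := by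
  have n1 : (σ b : ℕ) < σ a := h1
  have n2 : (σ c : ℕ) < σ b := h2
  refine ⟨![a, b, c], strictMono_vec hab hbc, ?_⟩
  intro i j
  match i, j with
  | 0, 0 => exact iff_of_false (by decide) (lt_irrefl _)
  | 1, 1 => exact iff_of_false (by decide) (lt_irrefl _)
  | 2, 2 => exact iff_of_false (by decide) (lt_irrefl _)
  | 0, 1 => exact iff_of_false (by decide) (not_lt.mpr h1.le)
  | 0, 2 => exact iff_of_false (by decide) (not_lt.mpr (h2.trans h1).le)
  | 1, 0 => exact iff_of_true (by decide) h1
  | 1, 2 => exact iff_of_false (by decide) (not_lt.mpr h2.le)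
  | 2, 0 => exact iff_of_true (by decide) (h2.trans h1)
  | 2, 1 => exact iff_of_true (by decide) h2

lemma card_le_filter {σ : Equiv.Perm (Fin n)} (x : Fin n) :
    (Finset.univ.filter (fun m => σ m ≤ x)).card = (x : ℕ) + 1 := by
  classical
  have himg : Finset.univ.filter (fun m => σ m ≤ x) = (Finset.Iic x).image σ.symm := by
    ext m
    simp only [Finset.mem_filter, Finset.mem_univ, true_and, Finset.mem_image,
      Finset.mem_Iic]
    constructor
    · intro h; exact ⟨σ m, h, σ.symm_apply_apply m⟩
    · rintro ⟨v, hv, rfl⟩; simpa using hv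
  rw [himg, Finset.card_image_of_injective _ σ.symm.injective, Fin.card_Iic]

lemma structured_of_avoids {σ : Equiv.Perm (Fin n)}
    (h231 : permAvoids σ p231) (h312 : permAvoids σ p312) (h321 : permAvoids σ p321) :
    Structured σ := by
  classical
  intro a b hab hba
  have hba' : (σ b : ℕ) < σ a := hba
  have hab' : (a : ℕ) < b := hab
  -- everything after b maps above σ a
  have K1 : ∀ c, b < c → σ a < σ c := by
    intro c hc
    by_contra hcon
    have hne : σ c ≠ σ a := fun e => (by
      have := σ.injective e
      subst this
      exact lt_irrefl _ (hab.trans hc) : False)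
    have hlt : σ c < σ a := lt_of_le_of_ne (not_lt.mp hcon) hne
    rcases lt_trichotomy (σ b) (σ c) with h | h | h
    · exact h312 (contains_312 hab hc h hlt)
    · exact absurd (σ.injective h) (ne_of_lt hc)
    · exact h321 (contains_321 hab hc hba h)
  -- everything before a maps below σ b
  have K2 : ∀ d, d < a → σ d < σ b := by
    intro d hd
    by_contra hcon
    have hne : σ b ≠ σ d := fun e => (by
      have := σ.injective e
      subst this
      exact lt_irrefl _ (hd.trans hab) : False)
    have hlt : σ b < σ d := lt_of_le_of_ne (not_lt.mp hcon) hne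
    rcases lt_trichotomy (σ d) (σ a) with h | h | h
    · exact h231 (contains_231 hd hab h hlt)
    · exact absurd (σ.injective h) (ne_of_lt hd)
    · exact h321 (contains_321 hd hab h hba)
  -- b = a + 1
  have K3 : (b : ℕ) = (a : ℕ) + 1 := by
    by_contra hK
    have hlt : (a : ℕ) + 1 < b := by omega
    set c : Fin n := ⟨(a : ℕ) + 1, lt_trans hlt b.isLt⟩ with hc
    have hac : a < c := by simp [Fin.lt_def, hc]
    have hcb : c < b := by simpa [Fin.lt_def, hc] using hlt
    rcases lt_trichotomy (σ c) (σ a) with h | h | h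
    · rcases lt_trichotomy (σ c) (σ b) with h' | h' | h'
      · exact h312 (contains_312 hac hcb h' hba)
      · exact absurd (σ.injective h') (ne_of_lt hcb)
      · exact h321 (contains_321 hac hcb h h')
    · exact absurd (σ.injective h) (ne_of_lt hac).symm
    · exact h231 (contains_231 hac hcb h hba)
  refine ⟨K3, ?_, ?_⟩
  · -- σ a = a + 1
    have hset : Finset.univ.filter (fun m => σ m ≤ σ a)
        = insert a (insert b (Finset.Iio a)) := by
      ext m
      simp only [Finset.mem_filter, Finset.mem_univ, true_and, Finset.mem_insert,
        Finset.mem_Iio]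
      constructor
      · intro hm
        by_contra hcon
        push_neg at hcon
        obtain ⟨hma, hmb, hma'⟩ := hcon
        have h1 : (m : ℕ) ≠ a := fun e => hma (Fin.ext e)
        have h2 : (m : ℕ) ≠ b := fun e => hmb (Fin.ext e)
        have h3 : (a : ℕ) ≤ (m : ℕ) := hma'
        have hbm : b < m := by
          rw [Fin.lt_def]; omega
        have := K1 m hbm
        have hv : (σ m : ℕ) ≤ σ a := hm
        have hv2 : (σ a : ℕ) < σ m := this
        omega
      · rintro (rfl | rfl | hm)
        · exact le_refl _
        · exact le_of_lt hba
        · exact le_of_lt ((K2 m hm).trans hba)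
    have hcard := card_le_filter (σ := σ) (σ a)
    rw [hset] at hcard
    rw [Finset.card_insert_of_notMem (by
          simp only [Finset.mem_insert, Finset.mem_Iio]
          push_neg
          exact ⟨ne_of_lt hab, le_refl a⟩),
        Finset.card_insert_of_notMem (by
          simp only [Finset.mem_Iio]
          exact not_lt.mpr (le_of_lt hab)),
        Fin.card_Iio] at hcard
    omega
  · -- σ b = a
    have hset : Finset.univ.filter (fun m => σ m ≤ σ b)
        = insert b (Finset.Iio a) := by
      ext m
      simp only [Finset.mem_filter, Finset.mem_univ, true_and, Finset.mem_insert,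
        Finset.mem_Iio]
      constructor
      · intro hm
        by_contra hcon
        push_neg at hcon
        obtain ⟨hmb, hma'⟩ := hcon
        have h2 : (m : ℕ) ≠ b := fun e => hmb (Fin.ext e)
        have h3 : (a : ℕ) ≤ (m : ℕ) := hma'
        have hv : (σ m : ℕ) ≤ σ b := hm
        rcases Nat.eq_or_lt_of_le h3 with he | hl
        · have : m = a := Fin.ext he.symm
          subst this
          omega
        · have hbm : b < m := by rw [Fin.lt_def]; omega
          have hv2 : (σ a : ℕ) < σ m := K1 m hbm
          omega
      · rintro (rfl | hm)
        · exact le_refl _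
        · exact le_of_lt (K2 m hm)
    have hcard := card_le_filter (σ := σ) (σ b)
    rw [hset,
        Finset.card_insert_of_notMem (by
          simp only [Finset.mem_Iio]
          exact not_lt.mpr (le_of_lt hab)),
        Fin.card_Iio] at hcard
    omega

lemma avoids_of_structured {σ : Equiv.Perm (Fin n)} (hs : Structured σ) :
    permAvoids σ p231 ∧ permAvoids σ p312 ∧ permAvoids σ p321 := by
  refine ⟨?_, ?_, ?_⟩
  · rintro ⟨f, hf, hiff⟩
    have hf01 : f 0 < f 1 := hf (by decide)
    have hf12 : f 1 < f 2 := hf (by decide)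
    have h20 : σ (f 2) < σ (f 0) := (hiff 2 0).mp (by decide)
    have h21 : σ (f 2) < σ (f 1) := (hiff 2 1).mp (by decide)
    obtain ⟨e1, _, _⟩ := hs (f 0) (f 2) (hf01.trans hf12) h20
    obtain ⟨e4, _, _⟩ := hs (f 1) (f 2) hf12 h21
    have : (f 0 : ℕ) < f 1 := hf01
    omega
  · rintro ⟨f, hf, hiff⟩
    have hf01 : f 0 < f 1 := hf (by decide)
    have hf12 : f 1 < f 2 := hf (by decide)
    have h10 : σ (f 1) < σ (f 0) := (hiff 1 0).mp (by decide)
    have h20 : σ (f 2) < σ (f 0) := (hiff 2 0).mp (by decide)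
    obtain ⟨e1, _, _⟩ := hs (f 0) (f 1) hf01 h10
    obtain ⟨e4, _, _⟩ := hs (f 0) (f 2) (hf01.trans hf12) h20
    have : (f 1 : ℕ) < f 2 := hf12
    omega
  · rintro ⟨f, hf, hiff⟩
    have hf01 : f 0 < f 1 := hf (by decide)
    have hf12 : f 1 < f 2 := hf (by decide)
    have h10 : σ (f 1) < σ (f 0) := (hiff 1 0).mp (by decide)
    have h21 : σ (f 2) < σ (f 1) := (hiff 2 1).mp (by decide)
    obtain ⟨e1, e2, e3⟩ := hs (f 0) (f 1) hf01 h10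
    obtain ⟨e4, e5, e6⟩ := hs (f 1) (f 2) hf12 h21
    omega

lemma exists_gt_of_lt {σ : Equiv.Perm (Fin n)} {k : Fin n} (h : (σ k : ℕ) < k) :
    ∃ m, m < k ∧ σ k < σ m := by
  classical
  by_contra hcon
  push_neg at hcon
  have hsub : (Finset.Iic k).image σ ⊆ Finset.Iic (σ k) := by
    intro v hv
    simp only [Finset.mem_image, Finset.mem_Iic] at hv ⊢
    obtain ⟨m, hm, rfl⟩ := hv
    rcases Nat.eq_or_lt_of_le (Fin.le_def.mp hm) with he | hl
    · have : m = k := Fin.ext he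
      subst this; exact le_refl _
    · exact hcon m hl
  have hc1 : ((Finset.Iic k).image σ).card = (k : ℕ) + 1 := by
    rw [Finset.card_image_of_injective _ σ.injective, Fin.card_Iic]
  have := Finset.card_le_card hsub
  rw [hc1, Fin.card_Iic] at this
  omega

lemma exists_lt_of_gt {σ : Equiv.Perm (Fin n)} {k : Fin n} (h : (k : ℕ) < σ k) :
    ∃ m, k < m ∧ σ m < σ k := by
  classical
  by_contra hcon
  push_neg at hcon
  have hsub : (Finset.Ici k).image σ ⊆ Finset.Ioi k := by
    intro v hv
    simp only [Finset.mem_image, Finset.mem_Ici, Finset.mem_Ioi] at hv ⊢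
    obtain ⟨m, hm, rfl⟩ := hv
    rcases Nat.eq_or_lt_of_le (Fin.le_def.mp hm) with he | hl
    · have : m = k := Fin.ext he.symm
      subst this
      exact Fin.lt_def.mpr h
    · have h2 : σ k ≤ σ m := hcon m hl
      exact lt_of_lt_of_le (Fin.lt_def.mpr h) h2
  have hc1 : ((Finset.Ici k).image σ).card = n - k := by
    rw [Finset.card_image_of_injective _ σ.injective, Fin.card_Ici]
  have := Finset.card_le_card hsub
  rw [hc1, Fin.card_Ioi] at this
  have hk := k.isLt
  omega

lemma pointwise {σ : Equiv.Perm (Fin n)} (hs : Structured σ) (k : Fin n) :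
    (σ k : ℕ) = k ∨
    ((σ k : ℕ) = (k : ℕ) + 1 ∧ ∃ h : (k : ℕ) + 1 < n, (σ ⟨(k : ℕ) + 1, h⟩ : ℕ) = k) ∨
    (0 < (k : ℕ) ∧ (σ k : ℕ) + 1 = k ∧
      (σ ⟨(k : ℕ) - 1, Nat.lt_of_le_of_lt (Nat.sub_le _ _) k.isLt⟩ : ℕ) = k) := by
  rcases Nat.lt_trichotomy (σ k : ℕ) k with h | h | h
  · obtain ⟨m, hmk, hm⟩ := exists_gt_of_lt h
    obtain ⟨e1, e2, e3⟩ := hs m k hmk hm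
    right; right
    have hm' : (m : ℕ) < k := hmk
    refine ⟨by omega, by omega, ?_⟩
    have he : (⟨(k : ℕ) - 1, Nat.lt_of_le_of_lt (Nat.sub_le _ _) k.isLt⟩ : Fin n) = m :=
      Fin.ext (by simp; omega)
    rw [he]; omega
  · exact Or.inl h
  · obtain ⟨m, hkm, hm⟩ := exists_lt_of_gt h
    obtain ⟨e1, e2, e3⟩ := hs k m hkm hm
    right; left
    have hlt : (k : ℕ) + 1 < n := by have := m.isLt; omega
    refine ⟨e2, hlt, ?_⟩
    have he : (⟨(k : ℕ) + 1, hlt⟩ : Fin n) = m := Fin.ext (by simp; omega)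
    rw [he]; omega

/-- The word associated to a permutation. -/
def toWord (σ : Equiv.Perm (Fin n)) : Fin n → Bool :=
  fun k => decide ((σ k : ℕ) = (k : ℕ) + 1)

lemma pointwise' {σ : Equiv.Perm (Fin n)} (hs : Structured σ) (i : ℕ) (hi : i < n) :
    (σ ⟨i, hi⟩ : ℕ) = i ∨
    ((σ ⟨i, hi⟩ : ℕ) = i + 1 ∧ ∃ h : i + 1 < n, (σ ⟨i + 1, h⟩ : ℕ) = i) ∨
    (0 < i ∧ (σ ⟨i, hi⟩ : ℕ) + 1 = i ∧ ∀ h : i - 1 < n, (σ ⟨i - 1, h⟩ : ℕ) = i) := by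
  rcases pointwise hs ⟨i, hi⟩ with h1 | ⟨h1, h2, h3⟩ | ⟨h1, h2, h3⟩
  · exact Or.inl h1
  · exact Or.inr (Or.inl ⟨h1, h2, h3⟩)
  · exact Or.inr (Or.inr ⟨h1, h2, fun h => h3⟩)

lemma toWord_good {σ : Equiv.Perm (Fin n)} (hs : Structured σ) : goodWord (toWord σ) := by
  constructor
  · intro i h hw
    have hw' : (σ ⟨i, Nat.lt_of_succ_lt h⟩ : ℕ) = i + 1 := by simpa [toWord] using hw
    simp only [toWord, decide_eq_false_iff_not]
    intro hc
    have hc' : (σ ⟨i + 1, h⟩ : ℕ) = (i + 1) + 1 := hc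
    rcases pointwise' hs i (Nat.lt_of_succ_lt h) with h1 | ⟨h1, h2, h3⟩ | ⟨h1, h2, h3⟩
    · omega
    · have h3' : (σ ⟨i + 1, h⟩ : ℕ) = i := h3
      omega
    · omega
  · intro h
    simp only [toWord, decide_eq_false_iff_not]
    have hb := (σ ⟨n - 1, Nat.sub_lt h Nat.one_pos⟩).isLt
    have hval : ((⟨n - 1, Nat.sub_lt h Nat.one_pos⟩ : Fin n) : ℕ) = n - 1 := rfl
    omega

lemma desSet_eq {σ : Equiv.Perm (Fin n)} (hs : Structured σ) :
    wordDesSet (toWord σ) = desSet σ := by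
  ext i
  simp only [wordDesSet, desSet, Finset.mem_filter, Finset.mem_Ico]
  refine and_congr_right fun hi => ?_
  obtain ⟨hi1, hi2⟩ := hi
  have him : i - 1 < n := Nat.lt_of_le_of_lt (Nat.sub_le i 1) hi2
  have hv : ((⟨i - 1, him⟩ : Fin n) : ℕ) = i - 1 := rfl
  constructor
  · intro hcond h
    obtain ⟨hw1, hw2⟩ := hcond hi2
    have hA : (σ ⟨i - 1, him⟩ : ℕ) = (i - 1) + 1 := by simpa [toWord] using hw1
    show σ ⟨i, hi2⟩ < σ ⟨i - 1, him⟩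
    rw [Fin.lt_def]
    rcases pointwise' hs (i - 1) him with g1 | ⟨g1, g2, g3⟩ | ⟨g1, g2, g3⟩
    · omega
    · have he : (⟨i - 1 + 1, g2⟩ : Fin n) = ⟨i, hi2⟩ := Fin.ext (show i - 1 + 1 = i by omega)
      rw [he] at g3
      omega
    · omega
  · intro hcond h
    have hdes : (σ ⟨i, hi2⟩ : ℕ) < σ ⟨i - 1, him⟩ := hcond hi2
    constructor
    · show toWord σ ⟨i - 1, him⟩ = true
      simp only [toWord, decide_eq_true_eq]
      rcases pointwise' hs (i - 1) him with g1 | ⟨g1, _, _⟩ | ⟨g1, g2, g3⟩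
      · exfalso
        rcases pointwise' hs i hi2 with f1 | ⟨f1, _, _⟩ | ⟨f1, f2, f3⟩
        · omega
        · omega
        · have f3' : (σ ⟨i - 1, him⟩ : ℕ) = i := f3 him
          omega
      · omega
      · exfalso
        rcases pointwise' hs i hi2 with f1 | ⟨f1, _, _⟩ | ⟨f1, f2, f3⟩
        · omega
        · omega
        · have f3' : (σ ⟨i - 1, him⟩ : ℕ) = i := f3 him
          omega
    · show toWord σ ⟨i, hi2⟩ = false
      simp only [toWord, decide_eq_false_iff_not]
      have hv2 : ((⟨i, hi2⟩ : Fin n) : ℕ) = i := rfl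
      rcases pointwise' hs (i - 1) him with g1 | ⟨g1, _, _⟩ | ⟨g1, g2, _⟩ <;> omega

/-- The permutation associated to a word. -/
def gfun (w : Fin n → Bool) (k : Fin n) : Fin n :=
  if h : (k : ℕ) + 1 < n ∧ w k = true then ⟨(k : ℕ) + 1, h.1⟩
  else if h2 : 0 < (k : ℕ) ∧ w ⟨(k : ℕ) - 1, Nat.lt_of_le_of_lt (Nat.sub_le _ _) k.isLt⟩ = true
    then ⟨(k : ℕ) - 1, Nat.lt_of_le_of_lt (Nat.sub_le _ _) k.isLt⟩
  else k

lemma gfun_invol {w : Fin n → Bool} (hw : goodWord w) : Function.Involutive (gfun w) := by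
  intro k
  by_cases h1 : (k : ℕ) + 1 < n ∧ w k = true
  · rw [show gfun w k = ⟨(k : ℕ) + 1, h1.1⟩ from dif_pos h1]
    have hnext : w ⟨(k : ℕ) + 1, h1.1⟩ = false := hw.1 k h1.1 h1.2
    rw [gfun, dif_neg (by simp [hnext]), dif_pos]
    · exact Fin.ext (by simp)
    · refine ⟨by simp, ?_⟩
      have he : (⟨((⟨(k : ℕ) + 1, h1.1⟩ : Fin n) : ℕ) - 1,
          Nat.lt_of_le_of_lt (Nat.sub_le _ _) (⟨(k : ℕ) + 1, h1.1⟩ : Fin n).isLt⟩ : Fin n) = k :=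
        Fin.ext (by simp)
      rw [he, h1.2]
  · rw [show gfun w k = _ from dif_neg h1]
    by_cases h2 : 0 < (k : ℕ) ∧ w ⟨(k : ℕ) - 1, Nat.lt_of_le_of_lt (Nat.sub_le _ _) k.isLt⟩ = true
    · rw [dif_pos h2]
      rw [gfun, dif_pos]
      · exact Fin.ext (by simp; omega)
      · refine ⟨by simp; omega, ?_⟩
        have he : (⟨((⟨(k : ℕ) - 1, Nat.lt_of_le_of_lt (Nat.sub_le _ _) k.isLt⟩ : Fin n) : ℕ),
            by exact Nat.lt_of_le_of_lt (Nat.sub_le _ _) k.isLt⟩ : Fin n)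
            = (⟨(k : ℕ) - 1, Nat.lt_of_le_of_lt (Nat.sub_le _ _) k.isLt⟩ : Fin n) := rfl
        simpa using h2.2
    · rw [dif_neg h2, gfun, dif_neg h1, dif_neg h2]

lemma gfun_bounds {w : Fin n → Bool} (k : Fin n) :
    (gfun w k : ℕ) ≤ (k : ℕ) + 1 ∧ (k : ℕ) ≤ (gfun w k : ℕ) + 1 := by
  rw [gfun]
  split_ifs <;> simp <;> omega

/-- The permutation associated to a good word, as an equiv. -/
def gPerm (w : Fin n → Bool) (hw : goodWord w) : Equiv.Perm (Fin n) :=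
  Function.Involutive.toPerm (gfun w) (gfun_invol hw)

lemma gPerm_apply {w : Fin n → Bool} (hw : goodWord w) (k : Fin n) :
    gPerm w hw k = gfun w k := rfl

lemma gPerm_structured {w : Fin n → Bool} (hw : goodWord w) : Structured (gPerm w hw) :=
  structured_of_bounds (fun k => gfun_bounds k)

lemma toWord_gPerm {w : Fin n → Bool} (hw : goodWord w) : toWord (gPerm w hw) = w := by
  funext k
  simp only [toWord, gPerm_apply]
  by_cases hwk : w k = true
  · have hlt : (k : ℕ) + 1 < n := by
      rcases Nat.lt_or_ge ((k : ℕ) + 1) n with hlt | hge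
      · exact hlt
      · exfalso
        have hk : (k : ℕ) = n - 1 := by have := k.isLt; omega
        have h0 : 0 < n := lt_of_le_of_lt (Nat.zero_le _) k.isLt
        have h2 := hw.2 h0
        have he : (⟨n - 1, Nat.sub_lt h0 Nat.one_pos⟩ : Fin n) = k := Fin.ext (by simp [hk])
        rw [he] at h2
        rw [h2] at hwk
        exact Bool.false_ne_true hwk
    have hval : (gfun w k : ℕ) = (k : ℕ) + 1 := by
      rw [gfun, dif_pos ⟨hlt, hwk⟩]
    simp [hval, hwk]
  · have hwk' : w k = false := by simpa using hwk
    have h1 : ¬ ((k : ℕ) + 1 < n ∧ w k = true) := fun hc => hwk hc.2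
    have hval : (gfun w k : ℕ) ≤ (k : ℕ) := by
      rw [gfun, dif_neg h1]
      by_cases h2 : 0 < (k : ℕ) ∧ w ⟨(k : ℕ) - 1, Nat.lt_of_le_of_lt (Nat.sub_le _ _) k.isLt⟩ = true
      · rw [dif_pos h2]
        exact Nat.sub_le _ _
      · rw [dif_neg h2]
    rw [hwk']
    exact decide_eq_false (by omega)

lemma gPerm_toWord {σ : Equiv.Perm (Fin n)} (hs : Structured σ) :
    gPerm (toWord σ) (toWord_good hs) = σ := by
  apply Equiv.ext
  intro k
  rw [gPerm_apply]
  have hk := k.isLt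
  have hvv : ((⟨(k : ℕ) - 1, Nat.lt_of_le_of_lt (Nat.sub_le _ _) k.isLt⟩ : Fin n) : ℕ)
      = (k : ℕ) - 1 := rfl
  rcases pointwise' hs (k : ℕ) hk with h1 | ⟨h1, h2, h3⟩ | ⟨h1, h2, h3⟩
  · have h1' : (σ k : ℕ) = k := h1
    rw [gfun, dif_neg, dif_neg]
    · exact Fin.ext h1'.symm
    · rintro ⟨hpos, hww⟩
      simp only [toWord, decide_eq_true_eq] at hww
      have heq : σ ⟨(k : ℕ) - 1, Nat.lt_of_le_of_lt (Nat.sub_le _ _) k.isLt⟩ = σ k :=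
        Fin.ext (by omega)
      have h5 := σ.injective heq
      have h6 := congrArg Fin.val h5
      simp only [hvv] at h6
      omega
    · rintro ⟨hlt, hww⟩
      simp only [toWord, decide_eq_true_eq] at hww
      omega
  · have h1' : (σ k : ℕ) = (k : ℕ) + 1 := h1
    rw [gfun, dif_pos ⟨(by omega : (k : ℕ) + 1 < n),
      (by simp [toWord, h1'] : toWord σ k = true)⟩]
    exact Fin.ext h1'.symm
  · have h2' : (σ k : ℕ) + 1 = (k : ℕ) := h2
    have h3' : (σ ⟨(k : ℕ) - 1, Nat.lt_of_le_of_lt (Nat.sub_le _ _) k.isLt⟩ : ℕ) = k :=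
      h3 (Nat.lt_of_le_of_lt (Nat.sub_le _ _) k.isLt)
    rw [gfun, dif_neg, dif_pos ⟨h1,
      (by simp only [toWord, decide_eq_true_eq]; omega :
        toWord σ ⟨(k : ℕ) - 1, Nat.lt_of_le_of_lt (Nat.sub_le _ _) k.isLt⟩ = true)⟩]
    · exact Fin.ext (show (k : ℕ) - 1 = ((σ k : ℕ)) by omega)
    · rintro ⟨hlt, hww⟩
      simp only [toWord, decide_eq_true_eq] at hww
      omega

/-- The bijection. -/
noncomputable def theEquiv (n : ℕ) :
    {σ : Equiv.Perm (Fin n) //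
        permAvoids σ p231 ∧ permAvoids σ p312 ∧ permAvoids σ p321} ≃
      {w : Fin n → Bool // goodWord w} where
  toFun σ := ⟨toWord σ.1, toWord_good (structured_of_avoids σ.2.1 σ.2.2.1 σ.2.2.2)⟩
  invFun w := ⟨gPerm w.1 w.2, avoids_of_structured (gPerm_structured w.2)⟩
  left_inv σ := Subtype.ext (gPerm_toWord (structured_of_avoids σ.2.1 σ.2.2.1 σ.2.2.2))
  right_inv w := Subtype.ext (toWord_gPerm w.2)

end AvAux
theorem av_231_312_321_words (n : ℕ) :
    (∃ f : {σ : Equiv.Perm (Fin n) //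
              permAvoids σ p231 ∧ permAvoids σ p312 ∧ permAvoids σ p321} ≃
           {w : Fin n → Bool // goodWord w},
        ∀ σ, wordDesSet ((f σ) : Fin n → Bool) = desSet (σ : Equiv.Perm (Fin n))) ∧
    (∀ q t : ℚ,
      ∑ σ ∈ Finset.univ.filter
          (fun σ : Equiv.Perm (Fin n) =>
            permAvoids σ p231 ∧ permAvoids σ p312 ∧ permAvoids σ p321),
        q ^ majIdx σ * t ^ desNum σ
        = ∑ w ∈ Finset.univ.filter (fun w : Fin n → Bool => goodWord w),
            q ^ wordMaj w * t ^ wordDes w) := by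
  classical
  constructor
  · refine ⟨AvAux.theEquiv n, ?_⟩
    intro σ
    exact AvAux.desSet_eq (AvAux.structured_of_avoids σ.2.1 σ.2.2.1 σ.2.2.2)
  · intro q t
    rw [Finset.sum_subtype (p := fun σ : Equiv.Perm (Fin n) =>
          permAvoids σ p231 ∧ permAvoids σ p312 ∧ permAvoids σ p321) _
          (fun x => Finset.mem_filter.trans (by simp))
          (fun σ => q ^ majIdx σ * t ^ desNum σ),
        Finset.sum_subtype (p := fun w : Fin n → Bool => goodWord w) _
          (fun x => Finset.mem_filter.trans (by simp))
          (fun w => q ^ wordMaj w * t ^ wordDes w)]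
    refine Fintype.sum_equiv (AvAux.theEquiv n) _ _ ?_
    intro σ
    have h := AvAux.desSet_eq (AvAux.structured_of_avoids σ.2.1 σ.2.2.1 σ.2.2.2)
    simp only [wordMaj, wordDes, majIdx, desNum]
    rw [show ((AvAux.theEquiv n) σ : Fin n → Bool) = AvAux.toWord σ.1 from rfl, h]
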